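/- If H is a uniform central graph with P = ⟨CP(H)⟩, κ = cov_A(P), and |I(H)| ≤ sκ + t with s, t natural numbers and t < κ, then r(H) ≤ s + 1. -/

import Mathlib

open SimpleGraph

variable {V : Type*} {ι : Type*}

/-- Eccentricity (in `ℕ∞`) of a vertex. -/
noncomputable def gecc (G : SimpleGraph V) (v : V) : ℕ∞ := ⨆ u, G.edist v u

/-- Radius of a graph. -/
noncomputable def grad (G : SimpleGraph V) : ℕ∞ := ⨅ v, gecc G v

/-- Diameter of a graph. -/
noncomputable def gdiam (G : SimpleGraph V) : ℕ∞ := ⨆ v, gecc G v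

/-- The center: vertices of minimum eccentricity. -/
def gcenter (G : SimpleGraph V) : Set V := {v | gecc G v = grad G}

/-- Eccentric vertices of `v`. -/
def eccSet (G : SimpleGraph V) (v : V) : Set V := {u | G.edist v u = gecc G v}

/-- The centered periphery. -/
def cperiph (G : SimpleGraph V) : Set V := ⋃ z ∈ gcenter G, eccSet G z

/-- Uniform central graph. -/
def IsUCG (G : SimpleGraph V) : Prop := ∀ c ∈ gcenter G, eccSet G c = cperiph G

/-- Condition A. -/
def CondA (G : SimpleGraph V) (P : ι → Set V) : Prop :=
  ∀ i, ∃ p, p ∉ P i ∧ ∀ q ∈ P i, 2 ≤ G.edist q p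

/-- Condition B. -/
def CondB (G : SimpleGraph V) (P : ι → Set V) : Prop :=
  ∀ i, ∀ p ∈ P i,
    (∃ p', p' ∉ P i ∧ 3 ≤ G.edist p p') ∨ (∃ j, j ≠ i ∧ ∀ q ∈ P j, 2 ≤ G.edist p q)

/-- Condition A′. -/
def CondA' (G : SimpleGraph V) (P : ι → Set V) : Prop :=
  ∀ i, (∃ p, p ∉ P i ∧ ∀ q ∈ P i, 3 ≤ G.edist q p) ∨
    (∃ j, j ≠ i ∧ ∀ q ∈ P i, ∀ q' ∈ P j, 2 ≤ G.edist q q')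

/-- Condition B′. -/
def CondB' (G : SimpleGraph V) (P : ι → Set V) : Prop :=
  ∀ i, ∀ p ∈ P i, ∃ j, j ≠ i ∧ ∀ q ∈ P j, 2 ≤ G.edist p q

/-- Minimum size of a covering satisfying condition A. -/
noncomputable def covA (G : SimpleGraph V) : ℕ :=
  sInf {k | ∃ P : Fin k → Set V, (⋃ i, P i) = Set.univ ∧ CondA G P}

/-- Minimum size of a covering satisfying conditions A and B. -/
noncomputable def covAB (G : SimpleGraph V) : ℕ :=
  sInf {k | ∃ P : Fin k → Set V, (⋃ i, P i) = Set.univ ∧ CondA G P ∧ CondB G P}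

/-- Distance from a vertex to the center. -/
noncomputable def distToCenter (G : SimpleGraph V) (u : V) : ℕ∞ :=
  ⨅ z ∈ gcenter G, G.edist u z

/-- The set of vertices at distance exactly `m` from the center. -/
def Dlevel (G : SimpleGraph V) (m : ℕ) : Set V := {u | distToCenter G u = (m : ℕ∞)}

/-- Vertices of the centered periphery lying on a radial path through `x`. -/
def Pset (G : SimpleGraph V) (r : ℕ) (x : V) : Set V :=
  {p | p ∈ cperiph G ∧ ∃ c ∈ gcenter G, ∃ W : G.Walk c p,
    W.IsPath ∧ W.length = r ∧ x ∈ W.support}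

/-- All vertices lying on some radial path through `x`. -/
def radialSupport (G : SimpleGraph V) (r : ℕ) (x : V) : Set V :=
  {u | ∃ c ∈ gcenter G, ∃ p ∈ cperiph G, ∃ W : G.Walk c p,
    W.IsPath ∧ W.length = r ∧ x ∈ W.support ∧ u ∈ W.support}

section Aux

variable {G : SimpleGraph V}

private lemma edist_cast' (hconn : G.Connected) (u v : V) :
    G.edist u v = (G.dist u v : ℕ∞) :=
  (ENat.coe_toNat (edist_ne_top_iff_reachable.mpr (hconn u v))).symm

private lemma getVert_dist_le' (hconn : G.Connected) {a b : V} (W : G.Walk a b) (i : ℕ) :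
    G.dist a (W.getVert i) ≤ i := by
  induction i with
  | zero => simp [W.getVert_zero]
  | succ n ih =>
      by_cases h : n < W.length
      · have hadj := W.adj_getVert_succ h
        have h1 : G.dist a (W.getVert (n + 1)) ≤
            G.dist a (W.getVert n) + G.dist (W.getVert n) (W.getVert (n + 1)) :=
          hconn.dist_triangle
        have h2 : G.dist (W.getVert n) (W.getVert (n + 1)) ≤ 1 := by
          simpa using G.dist_le hadj.toWalk
        omega
      · have h1 : W.getVert n = b := W.getVert_of_length_le (by omega)
        have h2 : W.getVert (n + 1) = b := W.getVert_of_length_le (by omega)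
        rw [h2, ← h1]
        omega

private lemma getVert_dist_eq' (hconn : G.Connected) {a b : V} (W : G.Walk a b)
    (hW : W.length = G.dist a b) {i : ℕ} (hi : i ≤ W.length) :
    G.dist a (W.getVert i) = i ∧ G.dist (W.getVert i) b = W.length - i := by
  have h1 := getVert_dist_le' hconn W i
  have h2 : G.dist (W.getVert i) b ≤ W.length - i := by
    have h3 := getVert_dist_le' hconn W.reverse (W.length - i)
    rw [W.getVert_reverse] at h3
    have hii : W.length - (W.length - i) = i := by omega
    rw [hii] at h3
    rw [SimpleGraph.dist_comm (G:=G) (u:=W.getVert i) (v:=b)]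
    exact h3
  have h3 : G.dist a b ≤ G.dist a (W.getVert i) + G.dist (W.getVert i) b :=
    hconn.dist_triangle
  omega

private lemma dist_split' (hconn : G.Connected) {a b x : V} (W : G.Walk a b)
    (hW : W.length = G.dist a b) (hx : x ∈ W.support) :
    G.dist a x + G.dist x b = G.dist a b := by
  classical
  have h1 : G.dist a x ≤ (W.takeUntil x hx).length := dist_le _
  have h2 : G.dist x b ≤ (W.dropUntil x hx).length := dist_le _
  have h3 : (W.takeUntil x hx).length + (W.dropUntil x hx).length = W.length := by
    have h := congrArg Walk.length (W.take_spec hx)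
    rwa [Walk.length_append] at h
  have h4 : G.dist a b ≤ G.dist a x + G.dist x b := hconn.dist_triangle
  omega

end Aux

/-- If `|I(H)| ≤ sκ + t` with `t < κ`, then `r(H) ≤ s + 1`. -/
theorem stmt8 [Fintype V] (G : SimpleGraph V) (hconn : G.Connected) (hUCG : IsUCG G)
    (s t : ℕ) (ht : t < covA (G.induce (cperiph G)))
    (hI : (Set.univ \ (gcenter G ∪ cperiph G)).ncard ≤
      s * covA (G.induce (cperiph G)) + t) :
    grad G ≤ (s : ℕ∞) + 1 := by
  classical
  haveI instS : ∀ s' : Set V, Fintype ↥s' := fun s' => (Set.toFinite s').fintype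
  set κ := covA (G.induce (cperiph G)) with hκdef
  -- V is nonempty
  rcases isEmpty_or_nonempty V with hV | hV
  · exfalso
    have hEmpty : IsEmpty ↥(cperiph G) := ⟨fun x => hV.false x.1⟩
    have h0 : 0 ∈ {k | ∃ P : Fin k → Set ↥(cperiph G),
        (⋃ i, P i) = Set.univ ∧ CondA (G.induce (cperiph G)) P} := by
      refine ⟨fun i => ∅, ?_, fun i => i.elim0⟩
      have huniv : (Set.univ : Set ↥(cperiph G)) = ∅ := Set.univ_eq_empty_iff.mpr hEmpty
      simp [huniv]
    have hz : κ ≤ 0 := Nat.sInf_le h0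
    omega
  -- basic facts
  have hecc_att : ∀ v : V, ∃ u, G.edist v u = gecc G v := by
    intro v; unfold gecc; exact exists_eq_ciSup_of_finite
  have hecc_ne_top : ∀ v : V, gecc G v ≠ ⊤ := by
    intro v
    obtain ⟨u, hu⟩ := hecc_att v
    rw [← hu]
    exact edist_ne_top_iff_reachable.mpr (hconn v u)
  have hrad_le : ∀ v : V, grad G ≤ gecc G v := by
    intro v; unfold grad; exact iInf_le _ v
  obtain ⟨z₀, hz₀⟩ : ∃ z, gecc G z = grad G := by
    unfold grad; exact exists_eq_ciInf_of_finite
  have hz₀c : z₀ ∈ gcenter G := hz₀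
  have hrad_ne_top : grad G ≠ ⊤ := hz₀ ▸ hecc_ne_top z₀
  set r := (grad G).toNat with hrdef
  have hradr : grad G = (r : ℕ∞) := (ENat.coe_toNat hrad_ne_top).symm
  have hedist : ∀ u v : V, G.edist u v = (G.dist u v : ℕ∞) := edist_cast' hconn
  -- distance from a center vertex to a peripheral vertex is r
  have hzp : ∀ z ∈ gcenter G, ∀ p ∈ cperiph G, G.dist z p = r := by
    intro z hz p hp
    have h1 : G.edist z p = gecc G z := by rw [← hUCG z hz] at hp; exact hp
    have h2 : G.edist z p = (r : ℕ∞) := by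
      rw [h1, show gecc G z = grad G from hz, hradr]
    rw [hedist] at h2
    exact_mod_cast h2
  -- membership in cperiph from distance r to a center vertex
  have hperiph_of : ∀ z ∈ gcenter G, ∀ u : V, G.dist z u = r → u ∈ cperiph G := by
    intro z hz u hd
    have h1 : G.edist z u = gecc G z := by
      rw [hedist, hd, show gecc G z = grad G from hz, hradr]
    have hu : u ∈ eccSet G z := h1
    rw [hUCG z hz] at hu
    exact hu
  -- non-central vertices have eccentricity ≥ r + 1
  have hecc_lb : ∀ v : V, v ∉ gcenter G → ∃ u, r + 1 ≤ G.dist v u := by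
    intro v hv
    obtain ⟨u, hu⟩ := hecc_att v
    refine ⟨u, ?_⟩
    have h1 : grad G ≤ gecc G v := hrad_le v
    have h2 : gecc G v ≠ grad G := hv
    have h3 : (r : ℕ∞) < G.edist v u := by
      rw [hu, ← hradr]
      exact lt_of_le_of_ne h1 (Ne.symm h2)
    rw [hedist] at h3
    have h4 : r < G.dist v u := by exact_mod_cast h3
    omega
  -- distToCenter bounds
  have hdc_le : ∀ x z : V, z ∈ gcenter G → distToCenter G x ≤ G.edist x z := by
    intro x z hz
    unfold distToCenter
    exact iInf₂_le z hz
  have hdc_ge : ∀ (x : V) (m : ℕ), (∀ z ∈ gcenter G, (m : ℕ∞) ≤ G.edist x z) →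
      (m : ℕ∞) ≤ distToCenter G x := by
    intro x m h
    unfold distToCenter
    exact le_iInf₂ h
  have hdc_att : ∀ x : V, ∃ z ∈ gcenter G, G.edist x z = distToCenter G x := by
    intro x
    haveI hne : Nonempty ↥(gcenter G) := ⟨⟨z₀, hz₀c⟩⟩
    obtain ⟨z, hz⟩ := exists_eq_ciInf_of_finite (f := fun z : ↥(gcenter G) => G.edist x ↑z)
    refine ⟨↑z, z.2, ?_⟩
    rw [hz]
    unfold distToCenter
    exact iInf_subtype'' (gcenter G) fun z' => G.edist x z'
  have hdc_center : ∀ z ∈ gcenter G, distToCenter G z = 0 := by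
    intro z hz
    refine le_antisymm ?_ zero_le
    have h := hdc_le z z hz
    simpa [SimpleGraph.edist_self] using h
  have hdc_periph : ∀ p ∈ cperiph G, distToCenter G p = (r : ℕ∞) := by
    intro p hp
    apply le_antisymm
    · have h1 := hdc_le p z₀ hz₀c
      have h2 : G.edist p z₀ = (r : ℕ∞) := by
        rw [hedist, SimpleGraph.dist_comm (G:=G) (u:=p) (v:=z₀), hzp z₀ hz₀c p hp]
      rwa [h2] at h1
    · apply hdc_ge
      intro z hz
      rw [hedist, SimpleGraph.dist_comm (G:=G) (u:=p) (v:=z), hzp z hz p hp]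
  -- suppose the radius is too large
  by_contra hcon
  push_neg at hcon
  have hrs : s + 2 ≤ r := by
    rw [hradr] at hcon
    have h1 : ((s + 1 : ℕ) : ℕ∞) < (r : ℕ∞) := by push_cast; exact hcon
    have h2 : s + 1 < r := by exact_mod_cast h1
    omega
  -- distance bound for members of Pset
  have hPset_dist : ∀ m : ℕ, ∀ x ∈ Dlevel G m, ∀ q ∈ Pset G r x,
      m + G.dist x q ≤ r := by
    intro m x hx q hq
    obtain ⟨hqP, c, hc, W, hWpath, hWlen, hxs⟩ := hq
    have hWd : W.length = G.dist c q := by rw [hWlen, hzp c hc q hqP]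
    have hsplit := dist_split' hconn W hWd hxs
    have hge : (m : ℕ∞) ≤ G.edist x c := by
      have h := hdc_le x c hc
      rw [show distToCenter G x = (m : ℕ∞) from hx] at h
      exact h
    rw [hedist] at hge
    have hge' : m ≤ G.dist x c := by exact_mod_cast hge
    rw [SimpleGraph.dist_comm (G:=G) (u:=x) (v:=c)] at hge'
    have hcq : G.dist c q = r := hzp c hc q hqP
    omega
  -- the witness for Condition A
  have hwitness : ∀ m : ℕ, 1 ≤ m → ∀ x ∈ Dlevel G m,
      ∃ u ∈ cperiph G, u ∉ Pset G r x ∧ ∀ q ∈ Pset G r x, q ≠ u ∧ ¬ G.Adj q u := by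
    intro m hm x hx
    obtain ⟨z, hz, hzd⟩ := hdc_att x
    have hzdm : G.dist x z = m := by
      have h1 : G.edist x z = (m : ℕ∞) := by
        rw [hzd, show distToCenter G x = (m : ℕ∞) from hx]
      rw [hedist] at h1
      exact_mod_cast h1
    obtain ⟨W2, hW2len⟩ := (hconn z x).exists_walk_length_eq_dist
    have hW2m : W2.length = m := by rw [hW2len, SimpleGraph.dist_comm (G:=G) (u:=z) (v:=x), hzdm]
    set w := W2.getVert 1 with hwdef
    have hzw : G.Adj z w := by
      have h0 : (0 : ℕ) < W2.length := by omega
      have h := W2.adj_getVert_succ h0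
      rwa [W2.getVert_zero] at h
    have hwx : G.dist w x = m - 1 := by
      have h := (getVert_dist_eq' hconn W2 hW2len (i := 1) (by omega)).2
      rwa [hW2m] at h
    have hwnc : w ∉ gcenter G := by
      intro hwc
      have h1 := hdc_le x w hwc
      rw [show distToCenter G x = (m : ℕ∞) from hx, hedist] at h1
      have h2 : m ≤ G.dist x w := by exact_mod_cast h1
      rw [SimpleGraph.dist_comm (G:=G) (u:=x) (v:=w)] at h2
      omega
    obtain ⟨u, hu⟩ := hecc_lb w hwnc
    have hwz1 : G.dist w z ≤ 1 := by
      simpa using G.dist_le hzw.symm.toWalk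
    have hzu : G.dist z u = r := by
      have h1 : G.edist z u ≤ gecc G z := by
        unfold gecc; exact le_iSup _ u
      rw [show gecc G z = grad G from hz, hradr, hedist] at h1
      have h2 : G.dist z u ≤ r := by exact_mod_cast h1
      have h3 : G.dist w u ≤ G.dist w z + G.dist z u := hconn.dist_triangle
      omega
    have huP : u ∈ cperiph G := hperiph_of z hz u hzu
    have hxu : r + 1 ≤ (m - 1) + G.dist x u := by
      have h1 : G.dist w u ≤ G.dist w x + G.dist x u := hconn.dist_triangle
      omega
    refine ⟨u, huP, ?_, ?_⟩
    · intro huPs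
      have h := hPset_dist m x hx u huPs
      omega
    · intro q hq
      have hqd := hPset_dist m x hx q hq
      have htri : G.dist x u ≤ G.dist x q + G.dist q u := hconn.dist_triangle
      have h2 : 2 ≤ G.dist q u := by omega
      constructor
      · rintro rfl
        rw [SimpleGraph.dist_self] at h2
        omega
      · intro hadj
        have h3 : G.dist q u = 1 := dist_eq_one_iff_adj.mpr hadj
        omega
  -- every peripheral vertex is covered at each level
  have hcov : ∀ m : ℕ, m ≤ r → ∀ p ∈ cperiph G, ∃ x ∈ Dlevel G m, p ∈ Pset G r x := by
    intro m hm p hp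
    have hd : G.dist z₀ p = r := hzp z₀ hz₀c p hp
    obtain ⟨W, hWpath, hWlen⟩ := hconn.exists_path_of_dist z₀ p
    have hWr : W.length = r := by rw [hWlen, hd]
    set x := W.getVert m with hxdef
    have hxs : x ∈ W.support :=
      Walk.mem_support_iff_exists_getVert.mpr ⟨m, rfl, by omega⟩
    have hpos := getVert_dist_eq' hconn W hWlen (i := m) (by omega)
    have hxD : x ∈ Dlevel G m := by
      show distToCenter G x = (m : ℕ∞)
      apply le_antisymm
      · have h1 := hdc_le x z₀ hz₀c
        have h2 : G.edist x z₀ = (m : ℕ∞) := by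
          rw [hedist, SimpleGraph.dist_comm (G:=G) (u:=x) (v:=z₀), hpos.1]
        rwa [h2] at h1
      · apply hdc_ge
        intro z hz
        rw [hedist]
        have h3 : G.dist z p = r := hzp z hz p hp
        have h4 : G.dist z p ≤ G.dist z x + G.dist x p := hconn.dist_triangle
        have h5 : G.dist x p = r - m := by rw [hpos.2, hWr]
        have h6 : m ≤ G.dist x z := by rw [SimpleGraph.dist_comm (G:=G) (u:=x) (v:=z)]; omega
        exact_mod_cast h6
    exact ⟨x, hxD, ⟨hp, z₀, hz₀c, W, hWpath, hWr, hxs⟩⟩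
  -- 2 ≤ edist in the induced graph
  have h2edist : ∀ a b : ↥(cperiph G), (a : V) ≠ (b : V) → ¬ G.Adj ↑a ↑b →
      2 ≤ (G.induce (cperiph G)).edist a b := by
    intro a b hne hnadj
    by_contra hlt
    push_neg at hlt
    have hnetop : (G.induce (cperiph G)).edist a b ≠ ⊤ := by
      intro h
      rw [h] at hlt
      exact (not_lt.mpr le_top) hlt
    obtain ⟨n, hn, hn2⟩ : ∃ n : ℕ, ((n : ℕ∞) = (G.induce (cperiph G)).edist a b) ∧ n < 2 := by
      set d := (G.induce (cperiph G)).edist a b with hd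
      lift d to ℕ using hnetop with n hn
      exact ⟨n, rfl, by exact_mod_cast hlt⟩
    interval_cases n
    · have h0 : (G.induce (cperiph G)).edist a b = 0 := by exact_mod_cast hn.symm
      exact hne (congrArg _ (edist_eq_zero_iff.mp h0))
    · have h1 : (G.induce (cperiph G)).edist a b = 1 := by exact_mod_cast hn.symm
      have hadj := edist_eq_one_iff_adj.mp h1
      exact hnadj (by simpa using hadj)
  -- each intermediate level has at least κ vertices
  have hκle : ∀ m : ℕ, 1 ≤ m → m ≤ r → κ ≤ (Dlevel G m).ncard := by
    intro m hm1 hmr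
    have hcard : (Dlevel G m).ncard = Fintype.card ↥(Dlevel G m) := by
      rw [Set.ncard_eq_toFinset_card', Set.toFinset_card]
    rw [hcard]
    rw [hκdef]
    unfold covA
    apply Nat.sInf_le
    set e := (Fintype.equivFin ↥(Dlevel G m)).symm with hedef
    refine ⟨fun i => {p : ↥(cperiph G) | ↑p ∈ Pset G r ↑(e i)}, ?_, ?_⟩
    · ext p
      simp only [Set.mem_iUnion, Set.mem_univ, iff_true, Set.mem_setOf_eq]
      obtain ⟨x, hxD, hpx⟩ := hcov m hmr ↑p p.2
      refine ⟨e.symm ⟨x, hxD⟩, ?_⟩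
      simpa using hpx
    · intro i
      have hxD : (↑(e i) : V) ∈ Dlevel G m := (e i).2
      obtain ⟨u, huP, huNot, hufar⟩ := hwitness m hm1 ↑(e i) hxD
      refine ⟨⟨u, huP⟩, huNot, ?_⟩
      intro q hq
      obtain ⟨hne, hnadj⟩ := hufar ↑q hq
      exact h2edist q ⟨u, huP⟩ hne hnadj
  -- intermediate levels lie in I
  have hsub : ∀ m : ℕ, 1 ≤ m → m < r →
      Dlevel G m ⊆ Set.univ \ (gcenter G ∪ cperiph G) := by
    intro m hm1 hmr x hx
    refine ⟨trivial, ?_⟩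
    rintro (hc | hp)
    · have h1 : (m : ℕ∞) = 0 := by
        rw [← show distToCenter G x = (m : ℕ∞) from hx]
        exact hdc_center x hc
      have h2 : m = 0 := by exact_mod_cast h1
      omega
    · have h1 : (m : ℕ∞) = (r : ℕ∞) := by
        rw [← show distToCenter G x = (m : ℕ∞) from hx]
        exact hdc_periph x hp
      have h2 : m = r := by exact_mod_cast h1
      omega
  -- counting
  have hdisj : ∀ m₁ ∈ Finset.Ico 1 r, ∀ m₂ ∈ Finset.Ico 1 r, m₁ ≠ m₂ →
      Disjoint (Dlevel G m₁).toFinset (Dlevel G m₂).toFinset := by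
    intro m₁ _ m₂ _ hne
    rw [Finset.disjoint_left]
    intro x hx1 hx2
    rw [Set.mem_toFinset] at hx1 hx2
    have h1 : (m₁ : ℕ∞) = (m₂ : ℕ∞) := by
      rw [← show distToCenter G x = (m₁ : ℕ∞) from hx1,
        ← show distToCenter G x = (m₂ : ℕ∞) from hx2]
    exact hne (by exact_mod_cast h1)
  have hbound : ∑ m ∈ Finset.Ico 1 r, (Dlevel G m).toFinset.card ≤
      (Set.univ \ (gcenter G ∪ cperiph G)).ncard := by
    calc ∑ m ∈ Finset.Ico 1 r, (Dlevel G m).toFinset.card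
        = ((Finset.Ico 1 r).biUnion fun m => (Dlevel G m).toFinset).card :=
          (Finset.card_biUnion hdisj).symm
      _ ≤ (Set.univ \ (gcenter G ∪ cperiph G)).toFinset.card := by
          apply Finset.card_le_card
          intro x hx
          rw [Finset.mem_biUnion] at hx
          obtain ⟨m, hmI, hxm⟩ := hx
          rw [Set.mem_toFinset] at hxm ⊢
          rw [Finset.mem_Ico] at hmI
          exact hsub m hmI.1 hmI.2 hxm
      _ = (Set.univ \ (gcenter G ∪ cperiph G)).ncard :=
          (Set.ncard_eq_toFinset_card' _).symm
  have hterm : ∀ m ∈ Finset.Ico 1 r, κ ≤ (Dlevel G m).toFinset.card := by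
    intro m hm
    rw [Finset.mem_Ico] at hm
    have h := hκle m hm.1 (by omega)
    rwa [Set.ncard_eq_toFinset_card'] at h
  have hsum : (r - 1) * κ ≤ ∑ m ∈ Finset.Ico 1 r, (Dlevel G m).toFinset.card := by
    calc (r - 1) * κ = ∑ _m ∈ Finset.Ico 1 r, κ := by
          rw [Finset.sum_const, Nat.card_Ico, smul_eq_mul]
      _ ≤ _ := Finset.sum_le_sum hterm
  have hfinal : (r - 1) * κ ≤ s * κ + t := le_trans (hsum.trans hbound) hI
  have hmul : (s + 1) * κ ≤ (r - 1) * κ := Nat.mul_le_mul_right κ (by omega)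
  have hexp : (s + 1) * κ = s * κ + κ := by ring
  omega
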